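/- Let P be an exponentially localized orthogonal projection on L²(ℝ²) admitting a generalized Wannier basis {w_{γ,a}}_{γ∈𝔇, 1≤a≤m(γ)} which is s-localized around an r-uniformly discrete set 𝔇 ⊂ ℝ² for some s > 5. Then there exists a constant I_MO > 0 such that for every L ≥ 1: ∑_{ξ ∈ 𝔇 ∩ Λ_L} ∑_{1≤c≤m(ξ)} ‖χ_{Λ_L^c} w_{ξ,c}‖_{L²(ℝ²)} ≤ I_MO · L, where Λ_L = [−L,L]² and χ_{Λ_L^c} is the characteristic function of the complement of Λ_L. -/

import Mathlib

open MeasureTheory Filter Topology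

noncomputable section

abbrev R2 : Type := EuclideanSpace ℝ (Fin 2)

abbrev H2 : Type := MeasureTheory.Lp ℂ 2 (volume : Measure R2)

/-- `T` is an integral operator with kernel `k`. -/
def HasKernel (T : H2 →L[ℂ] H2) (k : R2 → R2 → ℂ) : Prop :=
  ∀ f : H2, ∀ᵐ x : R2 ∂volume, (T f : R2 → ℂ) x = ∫ y : R2, k x y * (f : R2 → ℂ) y

/-- `P` is an orthogonal projection. -/
def IsOrthProj (P : H2 →L[ℂ] H2) : Prop := IsSelfAdjoint P ∧ P ∘L P = P

/-- `p` is a jointly continuous, exponentially localized kernel with constants `C`, `β`. -/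
def IsExpLocKernel (p : R2 → R2 → ℂ) (C β : ℝ) : Prop :=
  Continuous (fun q : R2 × R2 => p q.1 q.2) ∧ 0 < C ∧ 0 < β ∧
    ∀ x y : R2, ‖p x y‖ ≤ C * Real.exp (-β * ‖x - y‖)

/-- Hilbert-Schmidt operators on `L²(ℝ²)`. -/
def IsHilbertSchmidt (T : H2 →L[ℂ] H2) : Prop :=
  ∃ (w : Set H2) (b : HilbertBasis w ℂ H2), Summable fun i => ‖T (b i)‖ ^ 2

/-- Trace class operators, characterized as products of two Hilbert-Schmidt operators. -/
def IsTraceClass (T : H2 →L[ℂ] H2) : Prop :=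
  ∃ A B : H2 →L[ℂ] H2, IsHilbertSchmidt A ∧ IsHilbertSchmidt B ∧ T = A ∘L B

def traceBasisIdx : Set H2 := (exists_hilbertBasis ℂ H2).choose

def traceBasis : HilbertBasis traceBasisIdx ℂ H2 := (exists_hilbertBasis ℂ H2).choose_spec.choose

/-- The trace of an operator, computed in a fixed Hilbert basis of `L²(ℝ²)`.
For trace class operators this is the canonical trace for any choice of basis. -/
def opTrace (T : H2 →L[ℂ] H2) : ℂ :=
  ∑' i : traceBasisIdx, (inner ℂ (traceBasis i) (T (traceBasis i)) : ℂ)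

/-- The square `Λ_L = [-L, L]²` in `ℝ²`. -/
def Lam (L : ℝ) : Set R2 := {x : R2 | |x 0| ≤ L ∧ |x 1| ≤ L}

/-- The characteristic function of `Λ_L`, with values in `ℂ`. -/
def indL (L : ℝ) (x : R2) : ℂ := (Lam L).indicator (fun _ => (1 : ℂ)) x

/-- Formal composition of two integral kernels. -/
def kComp (k₁ k₂ : R2 → R2 → ℂ) : R2 → R2 → ℂ := fun x y => ∫ z : R2, k₁ x z * k₂ z y

/-- The kernel of the commutator `[X_i, P]`, when `P` has kernel `p`. -/
def commK (p : R2 → R2 → ℂ) (i : Fin 2) : R2 → R2 → ℂ :=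
  fun x y => ((x i - y i : ℝ) : ℂ) * p x y

/-- The kernel of the double commutator `[[X₁,P],[X₂,P]]`, when `P` has kernel `p`. -/
def dcommK (p : R2 → R2 → ℂ) : R2 → R2 → ℂ :=
  fun x y => kComp (commK p 0) (commK p 1) x y - kComp (commK p 1) (commK p 0) x y

/-- The kernel of `i χ_{Λ_L} P [[X₁,P],[X₂,P]] P χ_{Λ_L}`, when `P` has kernel `p`. -/
def chernK (p : R2 → R2 → ℂ) (L : ℝ) : R2 → R2 → ℂ :=
  fun x y => indL L x * (Complex.I * kComp p (kComp (dcommK p) p) x y) * indL L y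

/-- A set `𝔇 ⊆ ℝ²` is `r`-uniformly discrete. -/
def UnifDiscrete (𝔇 : Set R2) (r : ℝ) : Prop :=
  0 < r ∧ ∀ x : R2, (𝔇 ∩ Metric.ball x r).Subsingleton

/-- The index set of a generalized Wannier basis. -/
abbrev WIdx (𝔇 : Set R2) (m : R2 → ℕ) : Type := Σ γ : 𝔇, Fin (m (γ : R2))

/-- `w` is a generalized Wannier basis for `P`, `G`-localized around `𝔇`
with localization constant `M` and uniform multiplicity bound `mStar`. -/
def IsGWB (P : H2 →L[ℂ] H2) (𝔇 : Set R2) (m : R2 → ℕ) (mStar : ℕ)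
    (w : (γ : R2) → Fin (m γ) → H2) (G : ℝ → ℝ) (M : ℝ) : Prop :=
  (∀ γ ∈ 𝔇, m γ ≤ mStar) ∧
  Orthonormal ℂ (fun σ : WIdx 𝔇 m => w (σ.1 : R2) σ.2) ∧
  (∀ γ ∈ 𝔇, ∀ a, P (w γ a) = w γ a) ∧
  (∀ f : H2, P f = f → (∀ (γ : R2), γ ∈ 𝔇 → ∀ a, (inner ℂ (w γ a) f : ℂ) = 0) → f = 0) ∧
  (∀ γ ∈ 𝔇, ∀ a, ∫⁻ x : R2,
      (‖(w γ a : R2 → ℂ) x‖₊ : ENNReal) ^ 2 * ENNReal.ofReal (G ‖x - γ‖)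
      ≤ ENNReal.ofReal M)

/-- The Japanese bracket `⟨x⟩ = (1+‖x‖²)^{1/2}` on `ℝ²`. -/
def jap (x : R2) : ℝ := Real.sqrt (1 + ‖x‖ ^ 2)

/-- The Japanese bracket `⟨t⟩ = (1+t²)^{1/2}` on `ℝ`. -/
def japR (t : ℝ) : ℝ := Real.sqrt (1 + t ^ 2)



lemma sum_range_inv_sq (n : ℕ) : ∑ k ∈ Finset.range n, (1:ℝ)/(1+k)^2 ≤ 2 := by
  have key : ∀ n : ℕ, ∑ k ∈ Finset.range (n+1), (1:ℝ)/(1+k)^2 ≤ 2 - 1/((n:ℝ)+1) := by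
    intro n
    induction n with
    | zero => norm_num
    | succ n ih =>
      rw [Finset.sum_range_succ]
      have h1 : (1:ℝ)/(1+((n:ℕ)+1:ℕ))^2 ≤ 1/((n:ℝ)+1) - 1/((n:ℝ)+2) := by
        push_cast
        rw [div_sub_div _ _ (by positivity) (by positivity)]
        rw [div_le_div_iff₀ (by positivity) (by positivity)]
        nlinarith [sq_nonneg ((n:ℝ)+1)]
      push_cast at ih h1 ⊢
      rw [show ((n:ℝ)+1+1)=(n:ℝ)+2 from by ring]
      linarith
  cases n with
  | zero => simp
  | succ n =>
    have h := key n
    have h2 : (0:ℝ) < 1/((n:ℝ)+1) := by positivity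
    linarith

lemma sum_inv_sq_le (S : Finset ℕ) : ∑ k ∈ S, (1:ℝ)/(1+k)^2 ≤ 2 := by
  have hsub : S ⊆ Finset.range (S.sup id + 1) := fun k hk =>
    Finset.mem_range.2 (Nat.lt_succ_of_le (Finset.le_sup (f := id) hk))
  calc ∑ k ∈ S, (1:ℝ)/(1+k)^2 ≤ ∑ k ∈ Finset.range (S.sup id + 1), (1:ℝ)/(1+k)^2 :=
        Finset.sum_le_sum_of_subset_of_nonneg hsub (fun i _ _ => by positivity)
    _ ≤ 2 := sum_range_inv_sq _

lemma norm_sq_R2 (x : R2) : ‖x‖^2 = (x 0)^2 + (x 1)^2 := by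
  rw [EuclideanSpace.norm_eq, Real.sq_sqrt (by positivity)]
  simp [Fin.sum_univ_two, sq_abs]

lemma coord_le_norm (x : R2) (i : Fin 2) : |x i| ≤ ‖x‖ := by
  have h := norm_sq_R2 x
  have h2 : (x i)^2 ≤ ‖x‖^2 := by
    fin_cases i <;> simp only [Fin.mk_zero, Fin.mk_one, h, Fin.isValue] <;>
      nlinarith [sq_nonneg (x 0), sq_nonneg (x 1)]
  calc |x i| = Real.sqrt ((x i)^2) := (Real.sqrt_sq_eq_abs _).symm
    _ ≤ Real.sqrt (‖x‖^2) := Real.sqrt_le_sqrt h2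
    _ = ‖x‖ := Real.sqrt_sq (norm_nonneg x)

lemma count_rect {𝔇 : Set R2} {r : ℝ} (h : UnifDiscrete 𝔇 r)
    (S : Finset R2) (hS : ∀ x ∈ S, x ∈ 𝔇)
    {a₀ a₁ w₀ w₁ : ℝ} (hw₀ : 0 ≤ w₀) (hw₁ : 0 ≤ w₁)
    (h0 : ∀ x ∈ S, x 0 ∈ Set.Icc a₀ (a₀ + w₀))
    (h1 : ∀ x ∈ S, x 1 ∈ Set.Icc a₁ (a₁ + w₁)) :
    (S.card : ℝ) ≤ (w₀/(r/2)+1) * (w₁/(r/2)+1) := by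
  obtain ⟨hr, hsub⟩ := h
  set t : ℝ := r/2 with ht
  have htpos : 0 < t := by positivity
  classical
  set g : R2 → ℤ × ℤ := fun x => (⌊(x 0 - a₀)/t⌋, ⌊(x 1 - a₁)/t⌋) with hg
  -- injectivity on S
  have hinj : Set.InjOn g S := by
    intro x hx y hy hxy
    have hd : ∀ i : Fin 2, |x i - y i| < t := by
      intro i
      have key : ∀ (a : ℝ), ⌊(x i - a)/t⌋ = ⌊(y i - a)/t⌋ → |x i - y i| < t := by
        intro a hfl
        have := Int.abs_sub_lt_one_of_floor_eq_floor hfl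
        have e : (x i - a)/t - (y i - a)/t = (x i - y i)/t := by ring
        rw [e, abs_div, abs_of_pos htpos, div_lt_one htpos] at this
        exact this
      fin_cases i
      · exact key a₀ (congrArg Prod.fst hxy)
      · exact key a₁ (congrArg Prod.snd hxy)
    have hdist : dist y x < r := by
      rw [dist_eq_norm]
      have hsq : ‖y - x‖^2 < r^2 := by
        rw [norm_sq_R2]
        have e0 : (y-x) 0 = y 0 - x 0 := rfl
        have e1 : (y-x) 1 = y 1 - x 1 := rfl
        rw [e0, e1]
        have d0 := hd 0
        have d1 := hd 1
        rw [abs_sub_comm] at d0 d1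
        nlinarith [abs_nonneg (y 0 - x 0), abs_nonneg (y 1 - x 1),
          sq_abs (y 0 - x 0), sq_abs (y 1 - x 1), neg_abs_le (y 0 - x 0), le_abs_self (y 0 - x 0)]
      nlinarith [norm_nonneg (y - x)]
    exact (hsub x ⟨hS y hy, hdist⟩ ⟨hS x hx, by simp [hr]⟩).symm ▸ rfl
  have hcard : S.card = (S.image g).card := (Finset.card_image_of_injOn hinj).symm
  have himg : S.image g ⊆ Finset.Icc 0 ⌊w₀/t⌋ ×ˢ Finset.Icc 0 ⌊w₁/t⌋ := by
    intro z hz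
    obtain ⟨x, hx, rfl⟩ := Finset.mem_image.1 hz
    have b0 := h0 x hx
    have b1 := h1 x hx
    rw [Finset.mem_product, Finset.mem_Icc, Finset.mem_Icc]
    refine ⟨⟨Int.floor_nonneg.2 (div_nonneg (by linarith [b0.1]) htpos.le),
      Int.floor_le_floor ((div_le_div_iff_of_pos_right htpos).2 (by linarith [b0.2]))⟩,
      Int.floor_nonneg.2 (div_nonneg (by linarith [b1.1]) htpos.le),
      Int.floor_le_floor ((div_le_div_iff_of_pos_right htpos).2 (by linarith [b1.2]))⟩
  have hle : S.card ≤ (⌊w₀/t⌋.toNat + 1) * (⌊w₁/t⌋.toNat + 1) := by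
    rw [hcard]
    calc (S.image g).card ≤ (Finset.Icc 0 ⌊w₀/t⌋ ×ˢ Finset.Icc 0 ⌊w₁/t⌋).card :=
          Finset.card_le_card himg
      _ = (Finset.Icc 0 ⌊w₀/t⌋).card * (Finset.Icc 0 ⌊w₁/t⌋).card := Finset.card_product _ _
      _ = (⌊w₀/t⌋ + 1 - 0).toNat * (⌊w₁/t⌋ + 1 - 0).toNat := by rw [Int.card_Icc, Int.card_Icc]
      _ = (⌊w₀/t⌋.toNat + 1) * (⌊w₁/t⌋.toNat + 1) := by
          have n0 : (0:ℤ) ≤ ⌊w₀/t⌋ := Int.floor_nonneg.2 (div_nonneg hw₀ htpos.le)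
          have n1 : (0:ℤ) ≤ ⌊w₁/t⌋ := Int.floor_nonneg.2 (div_nonneg hw₁ htpos.le)
          have e0 : (⌊w₀/t⌋ + 1 - 0).toNat = ⌊w₀/t⌋.toNat + 1 := by omega
          have e1 : (⌊w₁/t⌋ + 1 - 0).toNat = ⌊w₁/t⌋.toNat + 1 := by omega
          rw [e0, e1]
  have n0 : (0:ℤ) ≤ ⌊w₀/t⌋ := Int.floor_nonneg.2 (div_nonneg hw₀ htpos.le)
  have n1 : (0:ℤ) ≤ ⌊w₁/t⌋ := Int.floor_nonneg.2 (div_nonneg hw₁ htpos.le)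
  have c0 : ((⌊w₀/t⌋.toNat : ℕ) : ℝ) ≤ w₀/t := by
    have := congrArg (fun z : ℤ => (z:ℝ)) (Int.toNat_of_nonneg n0)
    simp only [Int.cast_natCast] at this
    rw [this]; exact Int.floor_le _
  have c1 : ((⌊w₁/t⌋.toNat : ℕ) : ℝ) ≤ w₁/t := by
    have := congrArg (fun z : ℤ => (z:ℝ)) (Int.toNat_of_nonneg n1)
    simp only [Int.cast_natCast] at this
    rw [this]; exact Int.floor_le _
  calc (S.card : ℝ) ≤ (((⌊w₀/t⌋.toNat + 1) * (⌊w₁/t⌋.toNat + 1) : ℕ) : ℝ) := by exact_mod_cast hle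
    _ = ((⌊w₀/t⌋.toNat : ℕ) + 1) * ((⌊w₁/t⌋.toNat : ℕ) + 1) := by push_cast; ring
    _ ≤ (w₀/t+1) * (w₁/t+1) :=
        mul_le_mul (by linarith) (by linarith) (by positivity) (by positivity)

lemma measurableSet_Lam (L : ℝ) : MeasurableSet (Lam L) := by
  have h0 : Continuous (fun x : R2 => x 0) := by
    exact (EuclideanSpace.proj (0 : Fin 2) : R2 →L[ℝ] ℝ).continuous
  have h1 : Continuous (fun x : R2 => x 1) := by
    exact (EuclideanSpace.proj (1 : Fin 2) : R2 →L[ℝ] ℝ).continuous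
  have : Lam L = (fun x : R2 => x 0) ⁻¹' (Set.Icc (-L) L) ∩
      (fun x : R2 => x 1) ⁻¹' (Set.Icc (-L) L) := by
    ext x
    simp only [Lam, Set.mem_setOf_eq, Set.mem_inter_iff, Set.mem_preimage, Set.mem_Icc, abs_le]
  rw [this]
  exact ((measurableSet_Icc).preimage h0.measurable).inter
    ((measurableSet_Icc).preimage h1.measurable)

lemma mass_bound {γ : R2} {f : H2} {s M' : ℝ} (hs1 : 2 ≤ s) (hM : 1 ≤ M')
    (hloc : ∫⁻ x : R2, (‖(f : R2 → ℂ) x‖₊ : ENNReal)^2 * ENNReal.ofReal ((1+‖x-γ‖^2)^s)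
      ≤ ENNReal.ofReal M')
    {L : ℝ} (hγ : γ ∈ Lam L) (k : ℕ) (hk : (k:ℝ) ≤ L - max |γ 0| |γ 1|) :
    Real.sqrt (∫ x in (Lam L)ᶜ, ‖(f : R2 → ℂ) x‖^2) ≤ Real.sqrt M' * (2/(1+(k:ℝ))^2) := by
  set d : ℝ := L - max |γ 0| |γ 1| with hd
  have hd0 : 0 ≤ d := le_trans (Nat.cast_nonneg k) hk
  set A : ℝ := (1+d^2)^s with hA
  have hbase : (1:ℝ) ≤ 1 + d^2 := by nlinarith
  have hA1 : (1:ℝ) ≤ A := Real.one_le_rpow hbase (by linarith)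
  have hApos : (0:ℝ) < A := lt_of_lt_of_le one_pos hA1
  -- pointwise: on (Lam L)ᶜ, d ≤ ‖x - γ‖
  have hpt : ∀ x ∈ (Lam L)ᶜ, ENNReal.ofReal A ≤ ENNReal.ofReal ((1+‖x-γ‖^2)^s) := by
    intro x hx
    have hdist : d ≤ ‖x - γ‖ := by
      rw [Set.mem_compl_iff] at hx
      simp only [Lam, Set.mem_setOf_eq, not_and_or, not_le] at hx
      rcases hx with hx | hx
      · calc d ≤ L - |γ 0| := by have h := le_max_left |γ 0| |γ 1|; rw [hd]; linarith
          _ ≤ |x 0| - |γ 0| := by linarith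
          _ ≤ |x 0 - γ 0| := by
              have := abs_sub_abs_le_abs_sub (x 0) (γ 0); linarith
          _ = |(x - γ) 0| := rfl
          _ ≤ ‖x - γ‖ := coord_le_norm _ _
      · calc d ≤ L - |γ 1| := by have h := le_max_right |γ 0| |γ 1|; rw [hd]; linarith
          _ ≤ |x 1| - |γ 1| := by linarith
          _ ≤ |x 1 - γ 1| := by
              have := abs_sub_abs_le_abs_sub (x 1) (γ 1); linarith
          _ = |(x - γ) 1| := rfl
          _ ≤ ‖x - γ‖ := coord_le_norm _ _
    apply ENNReal.ofReal_le_ofReal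
    apply Real.rpow_le_rpow (by positivity) ?_ (by linarith)
    nlinarith [norm_nonneg (x - γ)]
  -- integral chain
  set g : R2 → ENNReal := fun x => (‖(f : R2 → ℂ) x‖₊ : ENNReal)^2 with hgdef
  have hAne : ENNReal.ofReal A ≠ ⊤ := ENNReal.ofReal_ne_top
  have hchain : ENNReal.ofReal A * ∫⁻ x in (Lam L)ᶜ, g x ≤ ENNReal.ofReal M' := by
    rw [← lintegral_const_mul' _ _ hAne]
    calc ∫⁻ x in (Lam L)ᶜ, ENNReal.ofReal A * g x
        ≤ ∫⁻ x in (Lam L)ᶜ, g x * ENNReal.ofReal ((1+‖x-γ‖^2)^s) := by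
          refine lintegral_mono_ae (((ae_restrict_iff' (measurableSet_Lam L).compl).2) ?_)
          refine ae_of_all _ (fun x hx => ?_)
          rw [mul_comm]
          exact mul_le_mul_right (hpt x hx) _
      _ ≤ ∫⁻ x : R2, g x * ENNReal.ofReal ((1+‖x-γ‖^2)^s) := setLIntegral_le_lintegral _ _
      _ ≤ ENNReal.ofReal M' := hloc
  have hIle : ∫⁻ x in (Lam L)ᶜ, g x ≤ ENNReal.ofReal (M'/A) := by
    rw [ENNReal.ofReal_div_of_pos hApos]
    rw [ENNReal.le_div_iff_mul_le (Or.inl (by simp [ENNReal.ofReal_eq_zero]; linarith))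
      (Or.inl hAne)]
    rw [mul_comm]; exact hchain
  have hint : ∫ x in (Lam L)ᶜ, ‖(f : R2 → ℂ) x‖^2 ≤ M'/A := by
    have hmeas : AEStronglyMeasurable (fun x : R2 => ‖(f : R2 → ℂ) x‖^2)
        ((volume : Measure R2).restrict (Lam L)ᶜ) :=
      (((Lp.aestronglyMeasurable f).restrict.norm.aemeasurable.pow_const 2)).aestronglyMeasurable
    rw [integral_eq_lintegral_of_nonneg_ae (ae_of_all _ (fun x => by positivity)) hmeas]
    refine ENNReal.toReal_le_of_le_ofReal (by positivity) ?_
    have : ∀ x : R2, ENNReal.ofReal (‖(f : R2 → ℂ) x‖^2) = g x := by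
      intro x
      rw [ENNReal.ofReal_pow (norm_nonneg _), ← coe_nnnorm, ENNReal.ofReal_coe_nnreal]
    simp_rw [this]
    exact hIle
  -- sqrt estimates
  have hsqrtA : ((1+(k:ℝ))^2)/2 ≤ Real.sqrt A := by
    have h1 : Real.sqrt A = (1+d^2)^(s/2) := by
      rw [hA, Real.sqrt_eq_rpow, ← Real.rpow_mul (by positivity), mul_one_div]
    rw [h1]
    have h2 : (1+d^2)^((1:ℝ)) ≤ (1+d^2)^(s/2) :=
      Real.rpow_le_rpow_of_exponent_le hbase (by linarith)
    rw [Real.rpow_one] at h2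
    have hkd : (k:ℝ)^2 ≤ d^2 := by nlinarith [Nat.cast_nonneg (α := ℝ) k]
    nlinarith [sq_nonneg ((k:ℝ)-1), Nat.cast_nonneg (α := ℝ) k]
  have hBpos : (0:ℝ) < ((1+(k:ℝ))^2)/2 := by positivity
  calc Real.sqrt (∫ x in (Lam L)ᶜ, ‖(f : R2 → ℂ) x‖^2)
      ≤ Real.sqrt (M'/A) := Real.sqrt_le_sqrt hint
    _ = Real.sqrt M' / Real.sqrt A := Real.sqrt_div (by linarith) A
    _ ≤ Real.sqrt M' / (((1+(k:ℝ))^2)/2) := by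
        apply div_le_div_of_nonneg_left (Real.sqrt_nonneg _) hBpos hsqrtA
    _ = Real.sqrt M' * (2/(1+(k:ℝ))^2) := by field_simp


lemma fiber_card_le {𝔇 : Set R2} {m : R2 → ℕ} (T : Finset (WIdx 𝔇 m)) (γv : R2)
    [DecidablePred (fun σ : WIdx 𝔇 m => (σ.1 : R2) = γv)] :
    (T.filter (fun σ : WIdx 𝔇 m => (σ.1 : R2) = γv)).card ≤ m γv := by
  classical
  rw [← Finset.card_range (m γv)]
  apply Finset.card_le_card_of_injOn (fun σ : WIdx 𝔇 m => (σ.2 : ℕ))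
  · intro σ hσ
    obtain ⟨-, h⟩ := Finset.mem_filter.1 hσ
    rw [Finset.mem_coe, Finset.mem_range, ← h]
    exact σ.2.isLt
  · intro σ hσ τ hτ h
    obtain ⟨-, h1⟩ := Finset.mem_filter.1 hσ
    obtain ⟨-, h2⟩ := Finset.mem_filter.1 hτ
    obtain ⟨g1, a⟩ := σ
    obtain ⟨g2, b⟩ := τ
    have hg : g1 = g2 := Subtype.ext (h1.trans h2.symm)
    subst hg
    simp only at h
    exact congrArg (Sigma.mk g1) (Fin.ext h)

set_option maxHeartbeats 2000000

/-- mass outside. For a GWB of an exponentially localized projection which is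
`s`-localized around an `r`-uniformly discrete set `𝔇` with `s > 5`, there is `I_MO > 0` such
that for every `L ≥ 1` the sum over `ξ ∈ 𝔇 ∩ Λ_L` (and `1 ≤ c ≤ m(ξ)`) of
`‖χ_{Λ_L^c} w_{ξ,c}‖_{L²}` is at most `I_MO · L`. -/
theorem statement_10
    (P : H2 →L[ℂ] H2) (hP : IsOrthProj P)
    (p : R2 → R2 → ℂ) (C β : ℝ) (hp : IsExpLocKernel p C β) (hker : HasKernel P p)
    (𝔇 : Set R2) (r : ℝ) (h𝔇 : UnifDiscrete 𝔇 r)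
    (s : ℝ) (hs : 5 < s)
    (m : R2 → ℕ) (mStar : ℕ) (w : (γ : R2) → Fin (m γ) → H2) (M : ℝ)
    (hGWB : IsGWB P 𝔇 m mStar w (fun t => (1 + t ^ 2) ^ s) M) :
    ∃ IMO : ℝ, 0 < IMO ∧ ∀ L : ℝ, 1 ≤ L →
      ∀ F : Finset (WIdx 𝔇 m), (∀ σ ∈ F, (σ.1 : R2) ∈ Lam L) →
        ∑ σ ∈ F, Real.sqrt (∫ x in (Lam L)ᶜ, ‖(w (σ.1 : R2) σ.2 : R2 → ℂ) x‖ ^ 2)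
          ≤ IMO * L := by
  classical
  obtain ⟨hm, horth, hPw, hcompl, hloc⟩ := hGWB
  set M' : ℝ := max M 1 with hM'
  have hM'1 : (1:ℝ) ≤ M' := le_max_right _ _
  set t : ℝ := r/2 with ht
  have htpos : 0 < t := by have := h𝔇.1; positivity
  set c₀ : ℝ := (1/t+1) * (2/t+1) with hc₀
  have hc₀pos : 0 < c₀ := by positivity
  have hsM : (0:ℝ) ≤ Real.sqrt M' := Real.sqrt_nonneg _
  refine ⟨16 * ((mStar:ℝ)+1) * c₀ * Real.sqrt M' + 1, by positivity, ?_⟩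
  intro L hL F hF
  have hLpos : (0:ℝ) < L := by linarith
  set K : WIdx 𝔇 m → ℕ :=
    fun σ => ⌊L - max |(σ.1 : R2) 0| |(σ.1 : R2) 1|⌋₊ with hKdef
  have hd0 : ∀ σ ∈ F, 0 ≤ L - max |(σ.1 : R2) 0| |(σ.1 : R2) 1| := by
    intro σ hσ
    have hγL := hF σ hσ
    have h1 := hγL.1
    have h2 := hγL.2
    have := max_le h1 h2
    linarith
  have hterm : ∀ σ ∈ F,
      Real.sqrt (∫ x in (Lam L)ᶜ, ‖(w (σ.1 : R2) σ.2 : R2 → ℂ) x‖ ^ 2)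
      ≤ Real.sqrt M' * (2/(1+(K σ : ℝ))^2) := by
    intro σ hσ
    have hs2 : (2:ℝ) ≤ s := by linarith
    refine mass_bound hs2 hM'1 ?_ (hF σ hσ) (K σ) (Nat.floor_le (hd0 σ hσ))
    exact le_trans (hloc (σ.1 : R2) σ.1.2 σ.2)
      (ENNReal.ofReal_le_ofReal (le_max_left _ _))
  -- count points whose floor-distance equals k
  have hcount : ∀ k : ℕ,
      (((F.filter (fun σ => K σ = k)).card : ℝ)) ≤ ((mStar:ℝ)+1) * (4*c₀*L) := by
    intro k
    set fib : Finset (WIdx 𝔇 m) := F.filter (fun σ => K σ = k) with hfib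
    set Γ : Finset R2 := fib.image (fun σ => (σ.1 : R2)) with hΓ
    have hcard1 : fib.card ≤ mStar * Γ.card := by
      apply Finset.card_le_mul_card_image _ mStar
      intro γv hγv
      obtain ⟨σ₀, hσ₀, rfl⟩ := Finset.mem_image.1 hγv
      exact le_trans (fiber_card_le fib _) (hm _ σ₀.1.2)
    -- properties of points in Γ
    have hΓprop : ∀ x ∈ Γ, x ∈ 𝔇 ∧ |x 0| ≤ L ∧ |x 1| ≤ L ∧
        L - (k:ℝ) - 1 ≤ max |x 0| |x 1| ∧ max |x 0| |x 1| ≤ L - k := by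
      intro x hx
      obtain ⟨σ, hσf, rfl⟩ := Finset.mem_image.1 hx
      obtain ⟨hσF, hσk⟩ := Finset.mem_filter.1 hσf
      have hγL := hF σ hσF
      have hd0' := hd0 σ hσF
      have hup : ((K σ : ℝ)) ≤ L - max |(σ.1 : R2) 0| |(σ.1 : R2) 1| :=
        Nat.floor_le hd0'
      have hlow : L - max |(σ.1 : R2) 0| |(σ.1 : R2) 1| < (K σ : ℝ) + 1 :=
        Nat.lt_floor_add_one _
      rw [hσk] at hup hlow
      exact ⟨σ.1.2, hγL.1, hγL.2, by linarith, by linarith⟩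
    -- split Γ into four rectangles
    have hΓcard : (Γ.card : ℝ) ≤ 4*c₀*L := by
      set c1 : R2 → Prop := fun x => (L-(k:ℝ)-1) ≤ x 0 ∧ x 0 ≤ (L-(k:ℝ)-1) + 1 with hc1
      set c2 : R2 → Prop := fun x => ((k:ℝ)-L) ≤ x 0 ∧ x 0 ≤ ((k:ℝ)-L) + 1 with hc2
      set c3 : R2 → Prop := fun x => (L-(k:ℝ)-1) ≤ x 1 ∧ x 1 ≤ (L-(k:ℝ)-1) + 1 with hc3
      set c4 : R2 → Prop := fun x => ((k:ℝ)-L) ≤ x 1 ∧ x 1 ≤ ((k:ℝ)-L) + 1 with hc4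
      have hcover : Γ ⊆ Γ.filter c1 ∪ Γ.filter c2 ∪ Γ.filter c3 ∪ Γ.filter c4 := by
        intro x hx
        obtain ⟨-, -, -, hmax1, hmax2⟩ := hΓprop x hx
        simp only [Finset.mem_union, Finset.mem_filter]
        rcases max_cases |x 0| |x 1| with ⟨he, -⟩ | ⟨he, -⟩
        · rw [he] at hmax1 hmax2
          rcases abs_cases (x 0) with ⟨ha, -⟩ | ⟨ha, -⟩
          · exact Or.inl (Or.inl (Or.inl ⟨hx, by constructor <;> linarith⟩))
          · exact Or.inl (Or.inl (Or.inr ⟨hx, by constructor <;> linarith⟩))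
        · rw [he] at hmax1 hmax2
          rcases abs_cases (x 1) with ⟨ha, -⟩ | ⟨ha, -⟩
          · exact Or.inl (Or.inr ⟨hx, by constructor <;> linarith⟩)
          · exact Or.inr ⟨hx, by constructor <;> linarith⟩
      have hL2 : (0:ℝ) ≤ 2*L := by linarith
      have hb1 : ((Γ.filter c1).card : ℝ) ≤ (1/t+1) * (2*L/t+1) := by
        refine count_rect (a₀ := L-(k:ℝ)-1) (w₀ := 1) (a₁ := -L) (w₁ := 2*L)
          h𝔇 _ (fun x hx => (hΓprop x (Finset.mem_filter.1 hx).1).1)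
          (by norm_num) hL2 ?_ ?_
        · intro x hx
          exact (Finset.mem_filter.1 hx).2
        · intro x hx
          have h := (hΓprop x (Finset.mem_filter.1 hx).1).2.2.1
          rw [abs_le] at h
          exact ⟨by linarith [h.1], by linarith [h.2]⟩
      have hb2 : ((Γ.filter c2).card : ℝ) ≤ (1/t+1) * (2*L/t+1) := by
        refine count_rect (a₀ := (k:ℝ)-L) (w₀ := 1) (a₁ := -L) (w₁ := 2*L)
          h𝔇 _ (fun x hx => (hΓprop x (Finset.mem_filter.1 hx).1).1)
          (by norm_num) hL2 ?_ ?_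
        · intro x hx
          exact (Finset.mem_filter.1 hx).2
        · intro x hx
          have h := (hΓprop x (Finset.mem_filter.1 hx).1).2.2.1
          rw [abs_le] at h
          exact ⟨by linarith [h.1], by linarith [h.2]⟩
      have hb3 : ((Γ.filter c3).card : ℝ) ≤ (2*L/t+1) * (1/t+1) := by
        refine count_rect (a₀ := -L) (w₀ := 2*L) (a₁ := L-(k:ℝ)-1) (w₁ := 1)
          h𝔇 _ (fun x hx => (hΓprop x (Finset.mem_filter.1 hx).1).1)
          hL2 (by norm_num) ?_ ?_
        · intro x hx
          have h := (hΓprop x (Finset.mem_filter.1 hx).1).2.1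
          rw [abs_le] at h
          exact ⟨by linarith [h.1], by linarith [h.2]⟩
        · intro x hx
          exact (Finset.mem_filter.1 hx).2
      have hb4 : ((Γ.filter c4).card : ℝ) ≤ (2*L/t+1) * (1/t+1) := by
        refine count_rect (a₀ := -L) (w₀ := 2*L) (a₁ := (k:ℝ)-L) (w₁ := 1)
          h𝔇 _ (fun x hx => (hΓprop x (Finset.mem_filter.1 hx).1).1)
          hL2 (by norm_num) ?_ ?_
        · intro x hx
          have h := (hΓprop x (Finset.mem_filter.1 hx).1).2.1
          rw [abs_le] at h
          exact ⟨by linarith [h.1], by linarith [h.2]⟩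
        · intro x hx
          exact (Finset.mem_filter.1 hx).2
      have hcards : Γ.card ≤ (Γ.filter c1).card + (Γ.filter c2).card
          + (Γ.filter c3).card + (Γ.filter c4).card := by
        calc Γ.card ≤ (Γ.filter c1 ∪ Γ.filter c2 ∪ Γ.filter c3 ∪ Γ.filter c4).card :=
              Finset.card_le_card hcover
          _ ≤ (Γ.filter c1 ∪ Γ.filter c2 ∪ Γ.filter c3).card + (Γ.filter c4).card :=
              Finset.card_union_le _ _
          _ ≤ (Γ.filter c1 ∪ Γ.filter c2).card + (Γ.filter c3).card + (Γ.filter c4).card := by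
              have := Finset.card_union_le (Γ.filter c1 ∪ Γ.filter c2) (Γ.filter c3)
              omega
          _ ≤ (Γ.filter c1).card + (Γ.filter c2).card + (Γ.filter c3).card
              + (Γ.filter c4).card := by
              have := Finset.card_union_le (Γ.filter c1) (Γ.filter c2)
              omega
      have hrect : (2*L/t+1) ≤ (2/t+1)*L := by
        have : 2*L/t = (2/t)*L := by ring
        rw [this]
        nlinarith [htpos, hL]
      have h1t : (0:ℝ) ≤ 1/t+1 := by positivity
      calc (Γ.card : ℝ) ≤ ((Γ.filter c1).card : ℝ) + ((Γ.filter c2).card : ℝ)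
            + ((Γ.filter c3).card : ℝ) + ((Γ.filter c4).card : ℝ) := by exact_mod_cast hcards
        _ ≤ 4 * ((1/t+1) * (2*L/t+1)) := by linarith
        _ ≤ 4 * ((1/t+1) * ((2/t+1)*L)) := by
            have h := mul_le_mul_of_nonneg_left hrect h1t
            linarith
        _ = 4*c₀*L := by rw [hc₀]; ring
    calc (fib.card : ℝ) ≤ (mStar : ℝ) * (Γ.card : ℝ) := by exact_mod_cast hcard1
      _ ≤ (mStar : ℝ) * (4*c₀*L) := by
          apply mul_le_mul_of_nonneg_left hΓcard (Nat.cast_nonneg _)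
      _ ≤ ((mStar:ℝ)+1) * (4*c₀*L) := by nlinarith
  -- assemble
  have hfpos : ∀ k : ℕ, (0:ℝ) ≤ Real.sqrt M' * (2/(1+(k:ℝ))^2) := by
    intro k; positivity
  calc ∑ σ ∈ F, Real.sqrt (∫ x in (Lam L)ᶜ, ‖(w (σ.1 : R2) σ.2 : R2 → ℂ) x‖ ^ 2)
      ≤ ∑ σ ∈ F, Real.sqrt M' * (2/(1+(K σ : ℝ))^2) := Finset.sum_le_sum hterm
    _ = ∑ k ∈ F.image K, ((F.filter (fun σ => K σ = k)).card)
          • (Real.sqrt M' * (2/(1+(k:ℝ))^2)) :=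
        Finset.sum_comp (fun k : ℕ => Real.sqrt M' * (2/(1+(k:ℝ))^2)) K
    _ ≤ ∑ k ∈ F.image K, (((mStar:ℝ)+1) * (4*c₀*L)) * (Real.sqrt M' * (2/(1+(k:ℝ))^2)) := by
        apply Finset.sum_le_sum
        intro k hk
        rw [nsmul_eq_mul]
        exact mul_le_mul_of_nonneg_right (hcount k) (hfpos k)
    _ = (((mStar:ℝ)+1) * (4*c₀*L) * Real.sqrt M' * 2) *
          ∑ k ∈ F.image K, (1:ℝ)/(1+(k:ℝ))^2 := by
        rw [Finset.mul_sum]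
        apply Finset.sum_congr rfl
        intro k hk
        ring
    _ ≤ (((mStar:ℝ)+1) * (4*c₀*L) * Real.sqrt M' * 2) * 2 := by
        apply mul_le_mul_of_nonneg_left (sum_inv_sq_le _) (by positivity)
    _ = (16 * ((mStar:ℝ)+1) * c₀ * Real.sqrt M') * L := by ring
    _ ≤ (16 * ((mStar:ℝ)+1) * c₀ * Real.sqrt M' + 1) * L := by nlinarith


end
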